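/- Fix k ≥ 2. There exist constants c and C such that for all n ≥ 1, |log R(n,k) − ((k−1)/2) log n| ≤ C, i.e. log R(n,k) = ((k−1)/2) log n + O(1). -/

import Mathlib

open Finset

/-- Number of occurrences of class `j` in the sequence `z` of length `n`. -/
def cnt {n k : ℕ} (z : Fin n → Fin k) (j : Fin k) : ℕ :=
  (Finset.univ.filter (fun i => z i = j)).card

/-- Maximized categorical likelihood of the sequence `z`:
`∏_j (c_j/n)^{c_j}`, with the convention `0^0 = 1`. -/
noncomputable def mlLik {n k : ℕ} (z : Fin n → Fin k) : ℝ :=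
  ∏ j : Fin k, ((cnt z j : ℝ) / (n : ℝ)) ^ (cnt z j)

/-- The NML normalizing constant (parametric complexity) of the categorical
model with `k` classes and `n` observations. -/
noncomputable def Rnk (n k : ℕ) : ℝ := ∑ z : Fin n → Fin k, mlLik z

open Real Nat


lemma stirling_pi_le (m : ℕ) (hm : 1 ≤ m) : Real.sqrt π ≤ Stirling.stirlingSeq m := by
  obtain ⟨p, rfl⟩ := Nat.exists_eq_add_of_le hm
  rw [add_comm]
  refine le_of_tendsto Stirling.tendsto_stirlingSeq_sqrt_pi
    (Filter.eventually_atTop.2 ⟨p + 1, fun q hq => ?_⟩)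
  obtain ⟨r, rfl⟩ := Nat.exists_eq_add_of_le hq
  show Stirling.stirlingSeq (p + 1 + r) ≤ Stirling.stirlingSeq (p + 1)
  have : p + 1 + r = (p + r) + 1 := by ring
  rw [this]
  exact Stirling.stirlingSeq'_antitone (Nat.le_add_right _ _)

lemma stirling_lb (m : ℕ) (hm : 1 ≤ m) :
    Real.sqrt m * ((m : ℝ) / Real.exp 1) ^ m ≤ (m.factorial : ℝ) := by
  have h1 := stirling_pi_le m hm
  have hd : (0:ℝ) < Real.sqrt (2 * m) * ((m : ℝ) / Real.exp 1) ^ m := by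
    have : (0:ℝ) < m := by exact_mod_cast hm
    positivity
  have h2 : (m.factorial : ℝ) = Stirling.stirlingSeq m * (Real.sqrt (2 * m) * ((m : ℝ) / Real.exp 1) ^ m) := by
    rw [Stirling.stirlingSeq]
    field_simp
  rw [h2]
  have hsq : Real.sqrt m ≤ Real.sqrt π * Real.sqrt (2*m) := by
    rw [← Real.sqrt_mul (by positivity)]
    apply Real.sqrt_le_sqrt
    nlinarith [Real.pi_gt_three, (show (0:ℝ) ≤ m by positivity)]
  calc Real.sqrt m * ((m : ℝ) / Real.exp 1) ^ m
      ≤ (Real.sqrt π * Real.sqrt (2*m)) * ((m : ℝ) / Real.exp 1) ^ m := by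
        apply mul_le_mul_of_nonneg_right hsq (by positivity)
    _ = Real.sqrt π * (Real.sqrt (2*m) * ((m : ℝ) / Real.exp 1) ^ m) := by ring
    _ ≤ _ := by apply mul_le_mul_of_nonneg_right h1 (le_of_lt hd)

lemma stirling_ub (m : ℕ) (hm : 1 ≤ m) :
    (m.factorial : ℝ) ≤ Real.exp 1 * (Real.sqrt m * ((m : ℝ) / Real.exp 1) ^ m) := by
  have h1 : Stirling.stirlingSeq m ≤ Real.exp 1 / Real.sqrt 2 := by
    obtain ⟨p, rfl⟩ := Nat.exists_eq_add_of_le hm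
    rw [add_comm]
    have := Stirling.stirlingSeq'_antitone (Nat.zero_le p)
    simpa [Stirling.stirlingSeq_one] using this
  have hd : (0:ℝ) < Real.sqrt (2 * m) * ((m : ℝ) / Real.exp 1) ^ m := by
    have : (0:ℝ) < m := by exact_mod_cast hm
    positivity
  have h2 : (m.factorial : ℝ) = Stirling.stirlingSeq m * (Real.sqrt (2 * m) * ((m : ℝ) / Real.exp 1) ^ m) := by
    rw [Stirling.stirlingSeq]; field_simp
  rw [h2]
  have hsq : Real.sqrt (2*(m:ℝ)) = Real.sqrt 2 * Real.sqrt m := Real.sqrt_mul (by norm_num) _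
  have h2pos : (0:ℝ) < Real.sqrt 2 := by positivity
  calc Stirling.stirlingSeq m * (Real.sqrt (2*m) * ((m : ℝ) / Real.exp 1) ^ m)
      ≤ (Real.exp 1 / Real.sqrt 2) * (Real.sqrt (2*m) * ((m : ℝ) / Real.exp 1) ^ m) :=
        mul_le_mul_of_nonneg_right h1 (le_of_lt hd)
    _ = Real.exp 1 * (Real.sqrt m * ((m : ℝ) / Real.exp 1) ^ m) := by
        push_cast
        rw [hsq]; field_simp

noncomputable def hfun (m : ℕ) : ℝ := (Real.sqrt ((max m 1 : ℕ) : ℝ))⁻¹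

lemma hfun_nonneg (m : ℕ) : 0 ≤ hfun m := by
  unfold hfun; positivity

lemma hfun_zero : hfun 0 = 1 := by
  unfold hfun; norm_num

lemma hfun_le_one (m : ℕ) : hfun m ≤ 1 := by
  unfold hfun
  rw [inv_le_one_iff₀]
  right
  rw [show (1:ℝ) = Real.sqrt 1 by simp]
  apply Real.sqrt_le_sqrt
  exact_mod_cast le_max_right m 1

lemma sum_hfun_le (n : ℕ) : ∑ m ∈ range (n+1), hfun m ≤ 1 + 2 * Real.sqrt n := by
  induction n with
  | zero => simp [hfun_zero]
  | succ n ih =>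
    rw [Finset.sum_range_succ]
    have hkey : hfun (n+1) ≤ 2 * (Real.sqrt (n+1) - Real.sqrt n) := by
      have hb : (0:ℝ) < Real.sqrt ((n:ℝ)+1) := Real.sqrt_pos.2 (by positivity)
      have ha : (0:ℝ) ≤ Real.sqrt n := Real.sqrt_nonneg _
      have ha2 : Real.sqrt n ^ 2 = (n:ℝ) := Real.sq_sqrt (by positivity)
      have hb2 : Real.sqrt ((n:ℝ)+1) ^ 2 = (n:ℝ)+1 := Real.sq_sqrt (by positivity)
      have : hfun (n+1) = (Real.sqrt ((n:ℝ)+1))⁻¹ := by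
        unfold hfun
        congr 2
        rw [Nat.max_eq_left (Nat.succ_le_succ (Nat.zero_le n))]
        push_cast; ring
      rw [this, inv_le_iff_one_le_mul₀ hb]
      nlinarith [sq_nonneg (Real.sqrt ((n:ℝ)+1) - Real.sqrt n)]
    have := add_le_add ih hkey
    refine this.trans ?_
    have : ((n:ℝ)+1) = ((n+1:ℕ):ℝ) := by push_cast; ring
    rw [← this]
    ring_nf
    exact le_rfl

noncomputable def gg {k : ℕ} (c : Fin k → ℕ) : ℝ :=
  ∏ j, Real.sqrt ((max (c j) 1 : ℕ) : ℝ)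

lemma gg_pos {k : ℕ} (c : Fin k → ℕ) : 0 < gg c := by
  refine Finset.prod_pos fun j _ => Real.sqrt_pos.2 ?_
  have : (1:ℕ) ≤ max (c j) 1 := le_max_right _ _
  exact_mod_cast Nat.lt_of_lt_of_le Nat.zero_lt_one this

lemma fact_lb (m : ℕ) :
    Real.sqrt ((max m 1 : ℕ) : ℝ) * ((m : ℝ) / Real.exp 1) ^ m ≤ (m.factorial : ℝ) := by
  rcases Nat.eq_zero_or_pos m with h | h
  · subst h; simp
  · rw [Nat.max_eq_left h]
    exact stirling_lb m h

lemma fact_ub (m : ℕ) :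
    (m.factorial : ℝ) ≤ Real.exp 1 * (Real.sqrt ((max m 1 : ℕ) : ℝ) * ((m : ℝ) / Real.exp 1) ^ m) := by
  rcases Nat.eq_zero_or_pos m with h | h
  · subst h; simpa using Real.one_le_exp (by norm_num)
  · rw [Nat.max_eq_left h]
    exact stirling_ub m h

lemma Qpos {k : ℕ} (c : Fin k → ℕ) : 0 < ∏ j, ((c j : ℝ)) ^ (c j) := by
  refine Finset.prod_pos fun j _ => ?_
  rcases Nat.eq_zero_or_pos (c j) with h | h
  · rw [h]; norm_num
  · exact pow_pos (by exact_mod_cast h) _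

lemma prod_div_pow {k n : ℕ} (c : Fin k → ℕ) (hc : ∑ j, c j = n) (x : ℝ) (hx : x ≠ 0) :
    ∏ j, ((c j : ℝ) / x) ^ (c j) = (∏ j, ((c j : ℝ)) ^ (c j)) / x ^ n := by
  simp_rw [div_pow]
  rw [Finset.prod_div_distrib, Finset.prod_pow_eq_pow_sum, hc]

lemma multinomial_cast_eq {k n : ℕ} (c : Fin k → ℕ) (hc : ∑ j, c j = n) :
    (Nat.multinomial univ c : ℝ) = (n.factorial : ℝ) / ∏ j, ((c j).factorial : ℝ) := by
  have hB : (0:ℝ) < ∏ j, ((c j).factorial : ℝ) :=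
    Finset.prod_pos fun j _ => by exact_mod_cast (c j).factorial_pos
  rw [eq_div_iff hB.ne']
  have := Nat.multinomial_spec (univ : Finset (Fin k)) c
  have hcast : ((∏ j, ((c j).factorial) : ℕ) : ℝ) * (Nat.multinomial univ c : ℝ)
      = (((∑ j, c j).factorial : ℕ) : ℝ) := by exact_mod_cast congrArg (Nat.cast (R := ℝ)) this
  rw [Nat.cast_prod] at hcast
  rw [mul_comm]
  rw [hcast, hc]

lemma term_ub (n k : ℕ) (hn : 1 ≤ n) (c : Fin k → ℕ) (hc : ∑ j, c j = n) :
    (Nat.multinomial univ c : ℝ) * ∏ j, ((c j : ℝ) / n) ^ (c j)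
      ≤ Real.exp 1 * Real.sqrt n / gg c := by
  have hnR : (0:ℝ) < n := by exact_mod_cast hn
  set Q := ∏ j, ((c j : ℝ)) ^ (c j) with hQ
  have hQpos : 0 < Q := Qpos c
  have hBpos : (0:ℝ) < ∏ j, ((c j).factorial : ℝ) :=
    Finset.prod_pos fun j _ => by exact_mod_cast (c j).factorial_pos
  have hggpos := gg_pos c
  have hepos : (0:ℝ) < Real.exp 1 := Real.exp_pos 1
  have hB_lb : gg c * (Q / (Real.exp 1) ^ n) ≤ ∏ j, ((c j).factorial : ℝ) := by
    have h1 : ∏ j, (Real.sqrt ((max (c j) 1 : ℕ) : ℝ) * ((c j : ℝ) / Real.exp 1) ^ (c j))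
        ≤ ∏ j, ((c j).factorial : ℝ) := by
      refine Finset.prod_le_prod (fun j _ => ?_) (fun j _ => fact_lb (c j))
      positivity
    calc gg c * (Q / (Real.exp 1) ^ n)
        = ∏ j, (Real.sqrt ((max (c j) 1 : ℕ) : ℝ) * ((c j : ℝ) / Real.exp 1) ^ (c j)) := by
          rw [Finset.prod_mul_distrib, ← gg, prod_div_pow c hc _ hepos.ne']
      _ ≤ _ := h1
  rw [multinomial_cast_eq c hc, prod_div_pow c hc _ hnR.ne']
  rw [_root_.div_mul_div_comm]
  have hnum : (n.factorial : ℝ) * Q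
      ≤ (Real.exp 1 * (Real.sqrt n * (((n:ℝ)^n) / (Real.exp 1)^n))) * Q := by
    refine mul_le_mul_of_nonneg_right ?_ hQpos.le
    have := stirling_ub n hn
    rwa [div_pow] at this
  have hden : (gg c * (Q / (Real.exp 1) ^ n)) * ((n:ℝ))^n
      ≤ (∏ j, ((c j).factorial : ℝ)) * ((n:ℝ))^n :=
    mul_le_mul_of_nonneg_right hB_lb (by positivity)
  have hdenpos : (0:ℝ) < (gg c * (Q / (Real.exp 1) ^ n)) * ((n:ℝ))^n := by positivity
  have key := div_le_div₀ (by positivity) hnum hdenpos hden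
  refine key.trans_eq ?_
  field_simp

lemma term_lb (n k : ℕ) (hn : 1 ≤ n) (c : Fin k → ℕ) (hc : ∑ j, c j = n) :
    Real.sqrt n / ((Real.exp 1) ^ k * gg c)
      ≤ (Nat.multinomial univ c : ℝ) * ∏ j, ((c j : ℝ) / n) ^ (c j) := by
  have hnR : (0:ℝ) < n := by exact_mod_cast hn
  set Q := ∏ j, ((c j : ℝ)) ^ (c j) with hQ
  have hQpos : 0 < Q := Qpos c
  have hBpos : (0:ℝ) < ∏ j, ((c j).factorial : ℝ) :=
    Finset.prod_pos fun j _ => by exact_mod_cast (c j).factorial_pos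
  have hggpos := gg_pos c
  have hepos : (0:ℝ) < Real.exp 1 := Real.exp_pos 1
  have hB_ub : (∏ j, ((c j).factorial : ℝ))
      ≤ (Real.exp 1)^k * (gg c * (Q / (Real.exp 1) ^ n)) := by
    have h1 : ∏ j, ((c j).factorial : ℝ)
        ≤ ∏ j, (Real.exp 1 * (Real.sqrt ((max (c j) 1 : ℕ) : ℝ) * ((c j : ℝ) / Real.exp 1) ^ (c j))) := by
      refine Finset.prod_le_prod (fun j _ => by positivity) (fun j _ => fact_ub (c j))
    refine h1.trans_eq ?_
    rw [Finset.prod_mul_distrib, Finset.prod_const, Finset.card_univ, Fintype.card_fin,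
      Finset.prod_mul_distrib, ← gg, prod_div_pow c hc _ hepos.ne']
  rw [multinomial_cast_eq c hc, prod_div_pow c hc _ hnR.ne']
  rw [_root_.div_mul_div_comm]
  have hnum : (Real.sqrt n * (((n:ℝ)^n) / (Real.exp 1)^n)) * Q ≤ (n.factorial : ℝ) * Q := by
    refine mul_le_mul_of_nonneg_right ?_ hQpos.le
    have := stirling_lb n hn
    rwa [div_pow] at this
  have hden : (∏ j, ((c j).factorial : ℝ)) * ((n:ℝ))^n
      ≤ ((Real.exp 1)^k * (gg c * (Q / (Real.exp 1) ^ n))) * ((n:ℝ))^n :=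
    mul_le_mul_of_nonneg_right hB_ub (by positivity)
  have hdenpos : (0:ℝ) < (∏ j, ((c j).factorial : ℝ)) * ((n:ℝ))^n := by positivity
  have key := div_le_div₀ (by positivity) hnum hdenpos hden
  refine le_trans (le_of_eq ?_) key
  rw [div_eq_div_iff (by positivity) (by positivity)]
  field_simp

lemma gg_inv {k : ℕ} (c : Fin k → ℕ) : (gg c)⁻¹ = ∏ j, hfun (c j) := by
  rw [gg, ← Finset.prod_inv_distrib]
  rfl

lemma cnt_sum {n k : ℕ} (z : Fin n → Fin k) : ∑ j, cnt z j = n := by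
  classical
  have := Finset.card_eq_sum_card_fiberwise (f := z) (s := univ) (t := univ)
    (fun x _ => mem_univ _)
  simpa [cnt, Finset.card_univ] using this.symm

open MvPolynomial in
lemma count_fiber (n k : ℕ) (c : Fin k → ℕ) (hc : ∑ j, c j = n) :
    ((univ : Finset (Fin n → Fin k)).filter (fun z => cnt z = c)).card
      = Nat.multinomial univ c := by
  classical
  set E : (Fin k → ℕ) → (Fin k →₀ ℕ) := fun d => Finsupp.equivFunOnFinite.symm d with hE
  have hEinj : Function.Injective E := Equiv.injective _
  have monoeq : ∀ d : Fin k → ℕ,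
      (∏ j, (X j : MvPolynomial (Fin k) ℕ) ^ d j) = monomial (E d) 1 := by
    intro d
    rw [← prod_X_pow_eq_monomial]
    refine (Finset.prod_subset (Finset.subset_univ _) ?_).symm
    intro j _ hj
    have : E d j = 0 := by
      by_contra h
      exact hj (Finsupp.mem_support_iff.2 h)
    have hdj : d j = 0 := this
    simp [hdj]
  have key : ∀ z : Fin n → Fin k,
      (∏ i, (X (z i) : MvPolynomial (Fin k) ℕ)) = ∏ j, X j ^ cnt z j := by
    intro z
    rw [← Finset.prod_fiberwise_of_maps_to (g := z) (t := univ) (fun i _ => mem_univ _)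
      (fun i => (X (z i) : MvPolynomial (Fin k) ℕ))]
    refine Finset.prod_congr rfl fun j _ => ?_
    rw [Finset.prod_congr rfl (fun i hi => ?_), Finset.prod_const]
    · rfl
    · rw [mem_filter] at hi
      rw [hi.2]
  have H1 : (∑ j, (X j : MvPolynomial (Fin k) ℕ)) ^ n
      = ∑ z : Fin n → Fin k, monomial (E (cnt z)) 1 := by
    have h0 : (∑ j, (X j : MvPolynomial (Fin k) ℕ)) ^ n
        = ∏ _i : Fin n, (∑ j, (X j : MvPolynomial (Fin k) ℕ)) := by
      rw [Finset.prod_const, Finset.card_univ, Fintype.card_fin]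
    rw [h0, Finset.prod_univ_sum]
    rw [Fintype.piFinset_univ]
    refine Finset.sum_congr rfl fun z _ => ?_
    rw [key z, monoeq]
  have H2 : (∑ j, (X j : MvPolynomial (Fin k) ℕ)) ^ n
      = ∑ d ∈ piAntidiag (univ : Finset (Fin k)) n,
          monomial (E d) (Nat.multinomial univ d) := by
    rw [Finset.sum_pow_eq_sum_piAntidiag]
    refine Finset.sum_congr rfl fun d _ => ?_
    rw [monoeq d]
    rw [show ((Nat.multinomial univ d : ℕ) : MvPolynomial (Fin k) ℕ) = C (Nat.multinomial univ d) by
      simp]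
    rw [C_mul_monomial, mul_one]
  have := congrArg (coeff (E c)) (H1.symm.trans H2)
  rw [coeff_sum, coeff_sum] at this
  simp only [coeff_monomial] at this
  have lhs_eq : (∑ z : Fin n → Fin k, if E (cnt z) = E c then (1:ℕ) else 0)
      = ((univ : Finset (Fin n → Fin k)).filter (fun z => cnt z = c)).card := by
    simp [Finset.sum_boole, hEinj.eq_iff]
  have rhs_eq : (∑ d ∈ piAntidiag (univ : Finset (Fin k)) n,
      if E d = E c then Nat.multinomial univ d else 0) = Nat.multinomial univ c := by
    have step : ∀ d ∈ piAntidiag (univ : Finset (Fin k)) n,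
        (if E d = E c then Nat.multinomial univ d else 0)
          = (if d = c then Nat.multinomial univ d else 0) := by
      intro d _
      exact if_congr (by simp [hEinj.eq_iff]) rfl rfl
    rw [Finset.sum_congr rfl step]
    rw [Finset.sum_ite_eq' (piAntidiag (univ : Finset (Fin k)) n) c (fun d => Nat.multinomial univ d)]
    rw [if_pos]
    rw [mem_piAntidiag]
    exact ⟨hc, fun i _ => mem_univ i⟩
  rw [lhs_eq, rhs_eq] at this
  exact this

lemma Rnk_eq (n k : ℕ) :
    Rnk n k = ∑ c ∈ piAntidiag (univ : Finset (Fin k)) n,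
      (Nat.multinomial univ c : ℝ) * ∏ j, ((c j : ℝ) / n) ^ (c j) := by
  classical
  rw [Rnk, ← Finset.sum_fiberwise_of_maps_to (g := cnt) (t := piAntidiag univ n)
    (fun z _ => by
      rw [mem_piAntidiag]
      exact ⟨cnt_sum z, fun i _ => mem_univ i⟩) mlLik]
  refine Finset.sum_congr rfl fun c hc => ?_
  have hmem := (mem_piAntidiag.1 hc).1
  have hval : ∀ z ∈ (univ : Finset (Fin n → Fin k)).filter (fun z => cnt z = c),
      mlLik z = ∏ j, ((c j : ℝ) / n) ^ (c j) := by
    intro z hz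
    rw [mem_filter] at hz
    rw [mlLik, hz.2]
  rw [Finset.sum_congr rfl hval, Finset.sum_const,
    count_fiber n k c hmem, nsmul_eq_mul]

set_option maxHeartbeats 1000000 in
lemma S_ub (n k : ℕ) (hn : 1 ≤ n) (hk : 1 ≤ k) :
    ∑ c ∈ piAntidiag (univ : Finset (Fin k)) n, (gg c)⁻¹
      ≤ (k : ℝ) * ((Real.sqrt k / Real.sqrt n) * (1 + 2 * Real.sqrt n) ^ (k - 1)) := by
  classical
  have hnR : (0:ℝ) < n := by exact_mod_cast hn
  have hkR : (0:ℝ) < k := by exact_mod_cast hk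
  have cover : ∀ c ∈ piAntidiag (univ : Finset (Fin k)) n, ∃ j₀ : Fin k, n ≤ k * c j₀ := by
    intro c hc
    by_contra h
    push_neg at h
    have hsum := (mem_piAntidiag.1 hc).1
    have : ∑ j : Fin k, k * c j < ∑ _j : Fin k, n := by
      apply Finset.sum_lt_sum_of_nonempty
      · exact univ_nonempty_iff.2 (Fin.pos_iff_nonempty.1 hk)
      · exact fun j _ => h j
    rw [← Finset.mul_sum, hsum, Finset.sum_const, Finset.card_univ, Fintype.card_fin,
      smul_eq_mul] at this
    exact lt_irrefl _ this
  have step2 : ∑ c ∈ piAntidiag (univ : Finset (Fin k)) n, (gg c)⁻¹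
      ≤ ∑ j₀ : Fin k, ∑ c ∈ (piAntidiag (univ : Finset (Fin k)) n).filter
          (fun c => n ≤ k * c j₀), (gg c)⁻¹ := by
    have h1 : ∀ c ∈ piAntidiag (univ : Finset (Fin k)) n,
        (gg c)⁻¹ ≤ ∑ j₀ : Fin k, if n ≤ k * c j₀ then (gg c)⁻¹ else 0 := by
      intro c hc
      obtain ⟨j₀, hj₀⟩ := cover c hc
      have hnn : ∀ j ∈ (univ : Finset (Fin k)),
          (0:ℝ) ≤ if n ≤ k * c j then (gg c)⁻¹ else 0 := by
        intro j _
        split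
        · exact (inv_pos.2 (gg_pos c)).le
        · exact le_rfl
      have := Finset.single_le_sum hnn (mem_univ j₀)
      simp only [hj₀, if_true] at this
      exact this
    calc ∑ c ∈ piAntidiag (univ : Finset (Fin k)) n, (gg c)⁻¹
        ≤ ∑ c ∈ piAntidiag (univ : Finset (Fin k)) n,
            ∑ j₀ : Fin k, if n ≤ k * c j₀ then (gg c)⁻¹ else 0 := Finset.sum_le_sum h1
      _ = ∑ j₀ : Fin k, ∑ c ∈ piAntidiag (univ : Finset (Fin k)) n,
            if n ≤ k * c j₀ then (gg c)⁻¹ else 0 := Finset.sum_comm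
      _ = _ := by
          refine Finset.sum_congr rfl fun j₀ _ => ?_
          rw [Finset.sum_filter]
  refine step2.trans ?_
  have step3 : ∀ j₀ : Fin k, ∑ c ∈ (piAntidiag (univ : Finset (Fin k)) n).filter
      (fun c => n ≤ k * c j₀), (gg c)⁻¹
      ≤ (Real.sqrt k / Real.sqrt n) * (1 + 2 * Real.sqrt n) ^ (k - 1) := by
    intro j₀
    set F : Fin k → ℕ → ℝ := fun j m => if j = j₀ then 1 else hfun m with hF
    have hFnn : ∀ j m, 0 ≤ F j m := by
      intro j m
      rw [hF]
      dsimp only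
      split
      · norm_num
      · exact hfun_nonneg m
    have hterm : ∀ c ∈ (piAntidiag (univ : Finset (Fin k)) n).filter (fun c => n ≤ k * c j₀),
        (gg c)⁻¹ ≤ (Real.sqrt k / Real.sqrt n) * ∏ j, F j (c j) := by
      intro c hc
      rw [mem_filter] at hc
      have hcj : n ≤ k * c j₀ := hc.2
      have hcj1 : 1 ≤ c j₀ := by
        rcases Nat.eq_zero_or_pos (c j₀) with h | h
        · rw [h, Nat.mul_zero] at hcj; omega
        · exact h
      have hcjpos : (0:ℝ) < (c j₀ : ℝ) := by exact_mod_cast hcj1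
      have hfj : hfun (c j₀) ≤ Real.sqrt k / Real.sqrt n := by
        have h2 : Real.sqrt n ≤ Real.sqrt (c j₀) * Real.sqrt k := by
          rw [← Real.sqrt_mul (by positivity)]
          apply Real.sqrt_le_sqrt
          calc (n:ℝ) ≤ ((k * c j₀ : ℕ) : ℝ) := by exact_mod_cast hcj
            _ = (c j₀ : ℝ) * k := by push_cast; ring
        have hmax : (max (c j₀) 1 : ℕ) = c j₀ := Nat.max_eq_left hcj1
        rw [hfun, hmax, le_div_iff₀ (Real.sqrt_pos.2 hnR),
          inv_mul_le_iff₀ (Real.sqrt_pos.2 hcjpos)]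
        linarith
      have hsplit : (gg c)⁻¹ = hfun (c j₀) * ∏ j ∈ univ.erase j₀, hfun (c j) := by
        rw [gg_inv, ← Finset.mul_prod_erase univ (fun j => hfun (c j)) (mem_univ j₀)]
      have hFsplit : ∏ j, F j (c j) = ∏ j ∈ univ.erase j₀, hfun (c j) := by
        rw [← Finset.mul_prod_erase univ (fun j => F j (c j)) (mem_univ j₀)]
        have h1 : F j₀ (c j₀) = 1 := by simp [F]
        rw [h1, one_mul]
        exact Finset.prod_congr rfl fun j hj => by simp [F, Finset.ne_of_mem_erase hj]
      rw [hsplit, hFsplit]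
      exact mul_le_mul_of_nonneg_right hfj
        (Finset.prod_nonneg fun j _ => hfun_nonneg _)
    set t : Fin k → Finset ℕ := fun j => if j = j₀ then {0} else range (n+1) with ht
    have himg : ∑ c ∈ (piAntidiag (univ : Finset (Fin k)) n), ∏ j, F j (c j)
        ≤ ∑ d ∈ Fintype.piFinset t, ∏ j, F j (d j) := by
      have hval : ∀ c : Fin k → ℕ,
          ∏ j, F j (Function.update c j₀ 0 j) = ∏ j, F j (c j) := by
        intro c
        refine Finset.prod_congr rfl fun j _ => ?_
        by_cases hj : j = j₀
        · subst hj
          simp [F]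
        · simp only [Function.update_of_ne hj]
      have hinj : ∀ c ∈ piAntidiag (univ : Finset (Fin k)) n,
          ∀ c' ∈ piAntidiag (univ : Finset (Fin k)) n,
          Function.update c j₀ 0 = Function.update c' j₀ 0 → c = c' := by
        intro c hc c' hc' heq
        have hs := (mem_piAntidiag.1 hc).1
        have hs' := (mem_piAntidiag.1 hc').1
        have hoff : ∀ j, j ≠ j₀ → c j = c' j := by
          intro j hj
          have := congrFun heq j
          simpa only [Function.update_of_ne hj] using this
        have hsum : c j₀ + ∑ j ∈ univ.erase j₀, c j = n := by
          rw [Finset.add_sum_erase univ c (mem_univ j₀)]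
          exact hs
        have hsum' : c' j₀ + ∑ j ∈ univ.erase j₀, c' j = n := by
          rw [Finset.add_sum_erase univ c' (mem_univ j₀)]
          exact hs'
        have heq2 : ∑ j ∈ univ.erase j₀, c j = ∑ j ∈ univ.erase j₀, c' j :=
          Finset.sum_congr rfl fun j hj => hoff j (Finset.ne_of_mem_erase hj)
        have hj0 : c j₀ = c' j₀ := by omega
        funext j
        by_cases hj : j = j₀
        · rw [hj, hj0]
        · exact hoff j hj
      have hsub : (piAntidiag (univ : Finset (Fin k)) n).image
          (fun c => Function.update c j₀ 0) ⊆ Fintype.piFinset t := by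
        intro d hd
        rw [Finset.mem_image] at hd
        obtain ⟨c, hc, rfl⟩ := hd
        rw [Fintype.mem_piFinset]
        intro j
        by_cases hj : j = j₀
        · subst hj
          simp [t]
        · simp only [Function.update_of_ne hj, t, if_neg hj, Finset.mem_range]
          have hs := (mem_piAntidiag.1 hc).1
          have : c j ≤ n := by
            rw [← hs]
            exact Finset.single_le_sum (fun j _ => Nat.zero_le _) (mem_univ j)
          omega
      calc ∑ c ∈ (piAntidiag (univ : Finset (Fin k)) n), ∏ j, F j (c j)
          = ∑ c ∈ (piAntidiag (univ : Finset (Fin k)) n), ∏ j, F j (Function.update c j₀ 0 j) :=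
            (Finset.sum_congr rfl fun c _ => (hval c)).symm
        _ = ∑ d ∈ (piAntidiag (univ : Finset (Fin k)) n).image (fun c => Function.update c j₀ 0),
              ∏ j, F j (d j) :=
            (Finset.sum_image (f := fun d : Fin k → ℕ => ∏ j, F j (d j)) hinj).symm
        _ ≤ _ := Finset.sum_le_sum_of_subset_of_nonneg hsub
            (fun d _ _ => Finset.prod_nonneg fun j _ => hFnn j (d j))
    have heval : ∑ d ∈ Fintype.piFinset t, ∏ j, F j (d j)
        ≤ (1 + 2 * Real.sqrt n) ^ (k - 1) := by
      rw [← Finset.prod_univ_sum]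
      have : ∏ j : Fin k, ∑ m ∈ t j, F j m
          = ∏ j ∈ univ.erase j₀, ∑ m ∈ range (n+1), hfun m := by
        rw [← Finset.mul_prod_erase univ (fun j => ∑ m ∈ t j, F j m) (mem_univ j₀)]
        have h0 : ∑ m ∈ t j₀, F j₀ m = 1 := by
          simp [t, F]
        rw [h0, one_mul]
        refine Finset.prod_congr rfl fun j hj => ?_
        have hj' := Finset.ne_of_mem_erase hj
        simp only [t, F, if_neg hj']
      rw [this]
      have hcard : (univ.erase j₀).card = k - 1 := by
        rw [Finset.card_erase_of_mem (mem_univ j₀), Finset.card_univ, Fintype.card_fin]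
      calc ∏ j ∈ univ.erase j₀, ∑ m ∈ range (n+1), hfun m
          ≤ ∏ _j ∈ univ.erase j₀, (1 + 2 * Real.sqrt n) := by
            refine Finset.prod_le_prod (fun j _ => ?_) (fun j _ => sum_hfun_le n)
            exact Finset.sum_nonneg fun m _ => hfun_nonneg m
        _ = (1 + 2 * Real.sqrt n) ^ (k - 1) := by
            rw [Finset.prod_const, hcard]
    calc ∑ c ∈ ((piAntidiag (univ : Finset (Fin k)) n).filter (fun c => n ≤ k * c j₀)), (gg c)⁻¹
        ≤ ∑ c ∈ ((piAntidiag (univ : Finset (Fin k)) n).filter (fun c => n ≤ k * c j₀)), (Real.sqrt k / Real.sqrt n) * ∏ j, F j (c j) :=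
          Finset.sum_le_sum hterm
      _ ≤ ∑ c ∈ (piAntidiag (univ : Finset (Fin k)) n),
            (Real.sqrt k / Real.sqrt n) * ∏ j, F j (c j) := by
          refine Finset.sum_le_sum_of_subset_of_nonneg (Finset.filter_subset _ _) ?_
          intro c _ _
          exact mul_nonneg (by positivity)
            (Finset.prod_nonneg fun j _ => hFnn j (c j))
      _ = (Real.sqrt k / Real.sqrt n) * ∑ c ∈ (piAntidiag (univ : Finset (Fin k)) n),
            ∏ j, F j (c j) := by rw [Finset.mul_sum]
      _ ≤ (Real.sqrt k / Real.sqrt n) * ((1 + 2 * Real.sqrt n) ^ (k - 1)) := by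
          refine mul_le_mul_of_nonneg_left (himg.trans heval) (by positivity)
  calc ∑ j₀ : Fin k, ∑ c ∈ ((piAntidiag (univ : Finset (Fin k)) n).filter (fun c => n ≤ k * c j₀)), (gg c)⁻¹
      ≤ ∑ _j₀ : Fin k, (Real.sqrt k / Real.sqrt n) * (1 + 2 * Real.sqrt n) ^ (k - 1) :=
        Finset.sum_le_sum fun j₀ _ => step3 j₀
    _ = (k : ℝ) * ((Real.sqrt k / Real.sqrt n) * (1 + 2 * Real.sqrt n) ^ (k - 1)) := by
        rw [Finset.sum_const, Finset.card_univ, Fintype.card_fin, nsmul_eq_mul]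

lemma gg_le {n k : ℕ} (hn : 1 ≤ n) (c : Fin k → ℕ) (hc : ∀ j, c j ≤ n) :
    gg c ≤ (Real.sqrt n) ^ k := by
  rw [gg]
  calc ∏ j, Real.sqrt ((max (c j) 1 : ℕ) : ℝ)
      ≤ ∏ _j : Fin k, Real.sqrt n := by
        refine Finset.prod_le_prod (fun j _ => Real.sqrt_nonneg _) (fun j _ => ?_)
        apply Real.sqrt_le_sqrt
        have : (max (c j) 1 : ℕ) ≤ n := by
          rcases max_choice (c j) 1 with h | h <;> rw [h]
          · exact hc j
          · exact hn
        exact_mod_cast this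
    _ = (Real.sqrt n) ^ k := by rw [Finset.prod_const, Finset.card_univ, Fintype.card_fin]

lemma S_lb (n k : ℕ) (hk : 1 ≤ k) (hn : 2 * k ≤ n) :
    ((n / k : ℕ) : ℝ) ^ (k - 1) * ((Real.sqrt n) ^ k)⁻¹
      ≤ ∑ c ∈ piAntidiag (univ : Finset (Fin k)) n, (gg c)⁻¹ := by
  classical
  have hn1 : 1 ≤ n := le_trans (by omega) hn
  have hkpos : 0 < k := hk
  set jL : Fin k := ⟨0, hkpos⟩ with hjL
  set t : Fin k → Finset ℕ := fun j => if j = jL then {0} else Finset.Icc 1 (n / k) with ht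
  set ψ : (Fin k → ℕ) → (Fin k → ℕ) :=
    fun d => Function.update d jL (n - ∑ j ∈ univ.erase jL, d j) with hψ
  have hDsum : ∀ d ∈ Fintype.piFinset t, ∑ j ∈ univ.erase jL, d j ≤ n := by
    intro d hd
    rw [Fintype.mem_piFinset] at hd
    have hbound : ∀ j ∈ univ.erase jL, d j ≤ n / k := by
      intro j hj
      have := hd j
      rw [ht] at this
      simp only [if_neg (Finset.ne_of_mem_erase hj)] at this
      exact (Finset.mem_Icc.1 this).2
    calc ∑ j ∈ univ.erase jL, d j ≤ ∑ _j ∈ univ.erase jL, (n / k) :=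
          Finset.sum_le_sum hbound
      _ = (k - 1) * (n / k) := by
          rw [Finset.sum_const, Finset.card_erase_of_mem (mem_univ jL),
            Finset.card_univ, Fintype.card_fin, smul_eq_mul]
      _ ≤ k * (n / k) := by
          exact Nat.mul_le_mul_right _ (Nat.sub_le k 1)
      _ ≤ n := by rw [Nat.mul_comm]; exact Nat.div_mul_le_self n k
  have hψmem : ∀ d ∈ Fintype.piFinset t, ψ d ∈ piAntidiag (univ : Finset (Fin k)) n := by
    intro d hd
    rw [mem_piAntidiag]
    refine ⟨?_, fun i _ => mem_univ i⟩
    have hsum : ∑ j : Fin k, ψ d j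
        = ψ d jL + ∑ j ∈ univ.erase jL, ψ d j := by
      rw [Finset.add_sum_erase univ (ψ d) (mem_univ jL)]
    rw [hsum]
    have h1 : ψ d jL = n - ∑ j ∈ univ.erase jL, d j := by
      simp [hψ]
    have h2 : ∑ j ∈ univ.erase jL, ψ d j = ∑ j ∈ univ.erase jL, d j := by
      refine Finset.sum_congr rfl fun j hj => ?_
      simp only [hψ, Function.update_of_ne (Finset.ne_of_mem_erase hj)]
    rw [h1, h2]
    have := hDsum d hd
    omega
  have hψle : ∀ d ∈ Fintype.piFinset t, ∀ j, ψ d j ≤ n := by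
    intro d hd j
    by_cases hj : j = jL
    · subst hj
      simp only [hψ, Function.update_self]
      omega
    · simp only [hψ, Function.update_of_ne hj]
      rw [Fintype.mem_piFinset] at hd
      have := hd j
      rw [ht] at this
      simp only [if_neg hj] at this
      have := (Finset.mem_Icc.1 this).2
      calc d j ≤ n / k := this
        _ ≤ n := Nat.div_le_self n k
  have hψinj : ∀ d ∈ Fintype.piFinset t, ∀ d' ∈ Fintype.piFinset t, ψ d = ψ d' → d = d' := by
    intro d hd d' hd' heq
    rw [Fintype.mem_piFinset] at hd hd'
    funext j
    by_cases hj : j = jL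
    · subst hj
      have h1 := hd jL
      have h2 := hd' jL
      simp [ht] at h1 h2
      rw [h1, h2]
    · have := congrFun heq j
      rw [hψ] at this
      simpa only [Function.update_of_ne hj] using this
  have himg : (Fintype.piFinset t).image ψ ⊆ piAntidiag (univ : Finset (Fin k)) n := by
    intro c hc
    rw [Finset.mem_image] at hc
    obtain ⟨d, hd, rfl⟩ := hc
    exact hψmem d hd
  have hterm : ∀ d ∈ Fintype.piFinset t, ((Real.sqrt n) ^ k)⁻¹ ≤ (gg (ψ d))⁻¹ := by
    intro d hd
    apply inv_anti₀ (gg_pos _)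
    exact gg_le hn1 (ψ d) (hψle d hd)
  have hcard : (Fintype.piFinset t).card = (n / k) ^ (k - 1) := by
    rw [Fintype.card_piFinset]
    calc ∏ j : Fin k, (t j).card
        = (t jL).card * ∏ j ∈ univ.erase jL, (t j).card :=
          (Finset.mul_prod_erase univ (fun j => (t j).card) (mem_univ jL)).symm
      _ = (n / k) ^ (k - 1) := by
          have h1 : (t jL).card = 1 := by simp [ht]
          have h2 : ∀ j ∈ univ.erase jL, (t j).card = n / k := by
            intro j hj
            simp only [ht, if_neg (Finset.ne_of_mem_erase hj), Nat.card_Icc]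
            exact Nat.succ_sub_one _
          rw [h1, one_mul, Finset.prod_congr rfl h2, Finset.prod_const,
            Finset.card_erase_of_mem (mem_univ jL), Finset.card_univ, Fintype.card_fin]
  calc ((n / k : ℕ) : ℝ) ^ (k - 1) * ((Real.sqrt n) ^ k)⁻¹
      = ∑ _d ∈ Fintype.piFinset t, ((Real.sqrt n) ^ k)⁻¹ := by
        rw [Finset.sum_const, hcard, nsmul_eq_mul]
        push_cast
        ring
    _ ≤ ∑ d ∈ Fintype.piFinset t, (gg (ψ d))⁻¹ := Finset.sum_le_sum hterm
    _ = ∑ c ∈ (Fintype.piFinset t).image ψ, (gg c)⁻¹ :=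
        (Finset.sum_image (f := fun c : Fin k → ℕ => (gg c)⁻¹) hψinj).symm
    _ ≤ ∑ c ∈ piAntidiag (univ : Finset (Fin k)) n, (gg c)⁻¹ :=
        Finset.sum_le_sum_of_subset_of_nonneg himg
          (fun c _ _ => (inv_pos.2 (gg_pos c)).le)

lemma mlLik_nonneg {n k : ℕ} (z : Fin n → Fin k) : 0 ≤ mlLik z := by
  unfold mlLik
  positivity

lemma Rnk_ge_one (n k : ℕ) (hn : 1 ≤ n) (hk : 0 < k) : 1 ≤ Rnk n k := by
  classical
  set z0 : Fin n → Fin k := fun _ => ⟨0, hk⟩ with hz0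
  have hcnt : ∀ j : Fin k, cnt z0 j = if (⟨0, hk⟩ : Fin k) = j then n else 0 := by
    intro j
    rw [cnt]
    by_cases hj : (⟨0, hk⟩ : Fin k) = j
    · rw [if_pos hj, Finset.filter_true_of_mem (fun i _ => hj),
        Finset.card_univ, Fintype.card_fin]
    · rw [if_neg hj, Finset.filter_false_of_mem (fun i _ => hj), Finset.card_empty]
  have hml : mlLik z0 = 1 := by
    rw [mlLik]
    rw [Finset.prod_eq_one]
    intro j _
    rw [hcnt j]
    by_cases hj : (⟨0, hk⟩ : Fin k) = j
    · rw [if_pos hj]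
      rw [div_self (by exact_mod_cast Nat.one_le_iff_ne_zero.1 hn : (n:ℝ) ≠ 0), one_pow]
    · rw [if_neg hj]
      norm_num
  rw [Rnk, ← hml]
  exact Finset.single_le_sum (fun z _ => mlLik_nonneg z) (mem_univ z0)

/-- `log R(n,k) = ((k-1)/2) log n + O(1)`. -/
theorem stmt9 (k : ℕ) (hk : 2 ≤ k) :
    ∃ C : ℝ, ∀ n : ℕ, 1 ≤ n →
      |Real.log (Rnk n k) - ((k : ℝ) - 1) / 2 * Real.log n| ≤ C := by
  classical
  obtain ⟨K, rfl⟩ : ∃ K, k = K + 2 := ⟨k - 2, by omega⟩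
  set e1 : ℝ := Real.exp 1 with he1
  have he1pos : 0 < e1 := Real.exp_pos 1
  set cU : ℝ := e1 * (((K:ℝ)+2) * (Real.sqrt ((K:ℝ)+2) * 3^(K+1))) with hcU
  have hcUpos : 0 < cU := by
    have : (0:ℝ) < (K:ℝ)+2 := by positivity
    have h2 : 0 < Real.sqrt ((K:ℝ)+2) := Real.sqrt_pos.2 this
    positivity
  set cL1 : ℝ := ((e1^(K+2)) * (2*((K:ℝ)+2))^(K+1))⁻¹ with hcL1
  have hcL1pos : 0 < cL1 := by
    have : (0:ℝ) < (K:ℝ)+2 := by positivity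
    positivity
  set cL2 : ℝ := ((Real.sqrt (2*((K:ℝ)+2)))^(K+1))⁻¹ with hcL2
  have hcL2pos : 0 < cL2 := by
    have h0 : (0:ℝ) < 2*((K:ℝ)+2) := by positivity
    have : 0 < Real.sqrt (2*((K:ℝ)+2)) := Real.sqrt_pos.2 h0
    positivity
  set cL : ℝ := min cL1 cL2 with hcL
  have hcLpos : 0 < cL := lt_min hcL1pos hcL2pos
  -- Upper bound
  have hUB : ∀ n : ℕ, 1 ≤ n → Rnk n (K+2) ≤ cU * (Real.sqrt n)^(K+1) := by
    intro n hn
    have hnR : (0:ℝ) < n := by exact_mod_cast hn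
    have hs1 : 1 ≤ Real.sqrt n := by
      rw [show (1:ℝ) = Real.sqrt 1 by simp]
      exact Real.sqrt_le_sqrt (by exact_mod_cast hn)
    have hsne : Real.sqrt n ≠ 0 := by positivity
    rw [Rnk_eq]
    calc ∑ c ∈ piAntidiag (univ : Finset (Fin (K+2))) n,
          (Nat.multinomial univ c : ℝ) * ∏ j, ((c j : ℝ) / n) ^ (c j)
        ≤ ∑ c ∈ piAntidiag (univ : Finset (Fin (K+2))) n, (e1 * Real.sqrt n) * (gg c)⁻¹ := by
          refine Finset.sum_le_sum fun c hc => ?_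
          have := term_ub n (K+2) hn c (mem_piAntidiag.1 hc).1
          rwa [div_eq_mul_inv] at this
      _ = (e1 * Real.sqrt n) * ∑ c ∈ piAntidiag (univ : Finset (Fin (K+2))) n, (gg c)⁻¹ := by
          rw [Finset.mul_sum]
      _ ≤ (e1 * Real.sqrt n) * (((K+2:ℕ) : ℝ) * ((Real.sqrt ((K+2:ℕ):ℝ) / Real.sqrt n)
            * (1 + 2 * Real.sqrt n) ^ ((K+2) - 1))) := by
          refine mul_le_mul_of_nonneg_left (S_ub n (K+2) hn (by omega)) (by positivity)
      _ ≤ cU * (Real.sqrt n)^(K+1) := by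
          have hred : (K+2) - 1 = K+1 := rfl
          rw [hred]
          have hpow : (1 + 2 * Real.sqrt n) ^ (K+1) ≤ (3 * Real.sqrt n) ^ (K+1) := by
            refine pow_le_pow_left₀ (by positivity) (by linarith) _
          have hcast : ((K+2:ℕ) : ℝ) = (K:ℝ)+2 := by push_cast; ring
          have hcast2 : (((K+2:ℕ)):ℝ) = (K:ℝ)+2 := hcast
          calc (e1 * Real.sqrt n) * (((K+2:ℕ) : ℝ) * ((Real.sqrt ((K+2:ℕ):ℝ) / Real.sqrt n)
                * (1 + 2 * Real.sqrt n) ^ (K+1)))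
              ≤ (e1 * Real.sqrt n) * (((K+2:ℕ) : ℝ) * ((Real.sqrt ((K+2:ℕ):ℝ) / Real.sqrt n)
                * (3 * Real.sqrt n) ^ (K+1))) := by
                have h0 : (0:ℝ) ≤ ((K+2:ℕ):ℝ) := by positivity
                have h1 : (0:ℝ) ≤ Real.sqrt ((K+2:ℕ):ℝ) / Real.sqrt n := by positivity
                refine mul_le_mul_of_nonneg_left ?_ (by positivity)
                refine mul_le_mul_of_nonneg_left ?_ h0
                exact mul_le_mul_of_nonneg_left hpow h1
            _ = cU * (Real.sqrt n)^(K+1) := by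
                rw [hcast, hcU, mul_pow]
                field_simp
  -- Lower bound
  have hLB : ∀ n : ℕ, 1 ≤ n → cL * (Real.sqrt n)^(K+1) ≤ Rnk n (K+2) := by
    intro n hn
    have hnR : (0:ℝ) < n := by exact_mod_cast hn
    have hsne : Real.sqrt n ≠ 0 := by positivity
    have hspos : 0 < Real.sqrt n := Real.sqrt_pos.2 hnR
    by_cases hbig : 2 * (K+2) ≤ n
    · -- main case
      have hq1 : 1 ≤ n / (K+2) := (Nat.one_le_div_iff (by omega)).2 (by omega)
      have hq2 : n < (K+2) * (n / (K+2)) + (K+2) := by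
        have h1 := Nat.div_add_mod n (K+2)
        have h2 : n % (K+2) < K+2 := Nat.mod_lt _ (by omega)
        omega
      have hq3 : n ≤ 2 * ((K+2) * (n / (K+2))) := by
        have h3 : (K+2) * 1 ≤ (K+2) * (n / (K+2)) := Nat.mul_le_mul_left _ hq1
        omega
      have hqR : (n:ℝ) / (2*((K:ℝ)+2)) ≤ ((n / (K+2) : ℕ) : ℝ) := by
        rw [div_le_iff₀ (by positivity)]
        have : (n:ℝ) ≤ 2 * (((K:ℝ)+2) * ((n / (K+2) : ℕ) : ℝ)) := by exact_mod_cast hq3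
        linarith
      calc cL * (Real.sqrt n)^(K+1)
          ≤ cL1 * (Real.sqrt n)^(K+1) := by
            refine mul_le_mul_of_nonneg_right (min_le_left _ _) (by positivity)
        _ ≤ (Real.sqrt n / e1^(K+2)) * ((((n:ℝ) / (2*((K:ℝ)+2)))^(K+1)) * ((Real.sqrt n ^ (K+2))⁻¹)) := by
            refine le_of_eq ?_
            set a := Real.sqrt n with ha
            have hapos : 0 < a := hspos
            have hnsq : (n:ℝ) = a * a := (Real.mul_self_sqrt hnR.le).symm
            rw [hnsq, hcL1]
            have hK2 : (0:ℝ) < (K:ℝ)+2 := by positivity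
            rw [div_pow, mul_pow]
            field_simp
            ring
        _ ≤ (Real.sqrt n / e1^(K+2)) * ((((n / (K+2) : ℕ) : ℝ))^(K+1) * ((Real.sqrt n ^ (K+2))⁻¹)) := by
            refine mul_le_mul_of_nonneg_left ?_ (by positivity)
            refine mul_le_mul_of_nonneg_right ?_ (by positivity)
            exact pow_le_pow_left₀ (by positivity) hqR _
        _ ≤ (Real.sqrt n / e1^(K+2)) * ∑ c ∈ piAntidiag (univ : Finset (Fin (K+2))) n, (gg c)⁻¹ := by
            refine mul_le_mul_of_nonneg_left ?_ (by positivity)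
            exact S_lb n (K+2) (by omega) hbig
        _ ≤ Rnk n (K+2) := by
            rw [Rnk_eq, Finset.mul_sum]
            refine Finset.sum_le_sum fun c hc => ?_
            have := term_lb n (K+2) hn c (mem_piAntidiag.1 hc).1
            calc Real.sqrt n / e1^(K+2) * (gg c)⁻¹
                = Real.sqrt n / (e1^(K+2) * gg c) := by
                  rw [div_mul_eq_div_div, div_eq_mul_inv, div_eq_mul_inv]
              _ ≤ _ := this
    · -- small n
      push_neg at hbig
      have h1 : (1:ℝ) ≤ Rnk n (K+2) := Rnk_ge_one n (K+2) hn (by omega)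
      refine le_trans ?_ h1
      have hsmall : Real.sqrt n ≤ Real.sqrt (2*((K:ℝ)+2)) := by
        apply Real.sqrt_le_sqrt
        have : (n:ℝ) ≤ 2*((K:ℝ)+2) := by
          have : n ≤ 2*(K+2) := by omega
          exact_mod_cast this
        linarith
      calc cL * (Real.sqrt n)^(K+1)
          ≤ cL2 * (Real.sqrt (2*((K:ℝ)+2)))^(K+1) := by
            refine mul_le_mul (min_le_right _ _) (pow_le_pow_left₀ (by positivity) hsmall _)
              (by positivity) hcL2pos.le
        _ = 1 := by
            rw [hcL2]
            rw [inv_mul_cancel₀]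
            positivity
  -- Assemble
  refine ⟨|Real.log cU| + |Real.log cL|, fun n hn => ?_⟩
  have hnR : (0:ℝ) < n := by exact_mod_cast hn
  have hsne : Real.sqrt n ≠ 0 := by positivity
  have hspos : 0 < Real.sqrt n := Real.sqrt_pos.2 hnR
  have hPpos : 0 < (Real.sqrt n)^(K+1) := by positivity
  have hRpos : 0 < Rnk n (K+2) := lt_of_lt_of_le (by positivity) (hLB n hn)
  have hlogP : Real.log ((Real.sqrt n)^(K+1)) = (((K:ℝ)+2) - 1) / 2 * Real.log n := by
    rw [Real.log_pow, Real.log_sqrt hnR.le]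
    push_cast
    ring
  have hub' : Real.log (Rnk n (K+2)) ≤ Real.log cU + Real.log ((Real.sqrt n)^(K+1)) := by
    rw [← Real.log_mul hcUpos.ne' hPpos.ne']
    exact Real.log_le_log hRpos (hUB n hn)
  have hlb' : Real.log cL + Real.log ((Real.sqrt n)^(K+1)) ≤ Real.log (Rnk n (K+2)) := by
    rw [← Real.log_mul hcLpos.ne' hPpos.ne']
    exact Real.log_le_log (by positivity) (hLB n hn)
  have hcast : ((K+2:ℕ):ℝ) = (K:ℝ)+2 := by push_cast; ring
  rw [hcast, ← hlogP]
  rw [abs_le]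
  constructor
  · have := neg_abs_le (Real.log cL)
    have h2 := abs_nonneg (Real.log cU)
    linarith
  · have := le_abs_self (Real.log cU)
    have h2 := abs_nonneg (Real.log cL)
    linarith
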